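/- Under the map g(x) = x²/(2x−1), the real part of x satisfies: Re(x) < 1/2 implies Re(g(x)) < 1/2, Re(x) > 1/2 implies Re(g(x)) > 1/2, and Re(x) = 1/2 implies Re(g(x)) = 1/2 (when 2x−1 ≠ 0). -/
import Mathlib


/-- Under g(x) = x²/(2x−1): Re(x) < 1/2 implies Re(g(x)) < 1/2,
Re(x) > 1/2 implies Re(g(x)) > 1/2, and Re(x) = 1/2 implies Re(g(x)) = 1/2
(when 2x−1 ≠ 0). -/
theorem half_plane_invariance (x : ℂ) (h : 2 * x - 1 ≠ 0) :
    (x.re < 1 / 2 → (x ^ 2 / (2 * x - 1)).re < 1 / 2) ∧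
    (x.re > 1 / 2 → (x ^ 2 / (2 * x - 1)).re > 1 / 2) ∧
    (x.re = 1 / 2 → (x ^ 2 / (2 * x - 1)).re = 1 / 2) := by
  have hd : 0 < Complex.normSq (2 * x - 1) := Complex.normSq_pos.2 h
  set a := x.re with ha
  set b := x.im with hb
  have hns : Complex.normSq (2 * x - 1) = (2 * a - 1) ^ 2 + (2 * b) ^ 2 := by
    simp [Complex.normSq_apply, Complex.sub_re, Complex.sub_im, Complex.mul_re,
      Complex.mul_im]
    ring
  have hre : (x ^ 2 / (2 * x - 1)).re =
      ((a ^ 2 - b ^ 2) * (2 * a - 1) + (2 * a * b) * (2 * b)) /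
        Complex.normSq (2 * x - 1) := by
    rw [Complex.div_re]
    simp [pow_two, Complex.mul_re, Complex.mul_im, Complex.sub_re, Complex.sub_im]
    ring
  rw [hre]
  refine ⟨fun hx => ?_, fun hx => ?_, fun hx => ?_⟩
  · rw [div_lt_iff₀ hd, hns]; nlinarith [sq_nonneg b, sq_nonneg (2 * a - 1)]
  · rw [gt_iff_lt, lt_div_iff₀ hd, hns]; nlinarith [sq_nonneg b, sq_nonneg (2 * a - 1)]
  · rw [div_eq_iff (ne_of_gt hd), hns, hx]; ring
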